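/- Let θ = (k_r) be a lacunary sequence with liminf_r k_r/k_{r-1} = 1. Then there exists a sequence of real numbers that is statistically quasi-Cauchy but not lacunarily statistically quasi-Cauchy with respect to θ. -/

import Mathlib

open Filter Finset Topology

/-- A sequence `x` converges statistically to `ℓ`. -/
def StatConvTo (x : ℕ → ℝ) (ℓ : ℝ) : Prop :=
  ∀ ε > 0, Tendsto (fun n : ℕ =>
      ((((Finset.range n).filter fun k => ε ≤ |x k - ℓ|).card : ℝ) / (n : ℝ)))
    atTop (𝓝 0)

/-- A sequence is statistically quasi-Cauchy if its difference sequence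
converges statistically to `0`. -/
def StatQC (a : ℕ → ℝ) : Prop :=
  StatConvTo (fun n => a (n + 1) - a n) 0

/-- A lacunary sequence `θ = (k_r)`: strictly increasing, `k 0 = 0`,
and `h_r = k_{r+1} - k_r → ∞`. -/
structure Lacunary where
  k : ℕ → ℕ
  strictMono : StrictMono k
  zero : k 0 = 0
  h_tendsto : Tendsto (fun r => k (r + 1) - k r) atTop atTop

/-- Lacunary statistical convergence of `x` to `ℓ` with respect to `θ`. -/
def LacStatConvTo (θ : Lacunary) (x : ℕ → ℝ) (ℓ : ℝ) : Prop :=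
  ∀ ε > 0, Tendsto (fun r : ℕ =>
      ((((Finset.Ioc (θ.k r) (θ.k (r + 1))).filter fun i => ε ≤ |x i - ℓ|).card : ℝ)
        / ((θ.k (r + 1) - θ.k r : ℕ) : ℝ)))
    atTop (𝓝 0)

/-- A sequence is lacunarily statistically quasi-Cauchy (w.r.t. `θ`). -/
def LacStatQC (θ : Lacunary) (a : ℕ → ℝ) : Prop :=
  LacStatConvTo θ (fun n => a (n + 1) - a n) 0

/-- `liminf q_r > 1` where `q_r = k_{r+1} / k_r`. -/
def LiminfQGtOne (θ : Lacunary) : Prop :=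
  ∃ a : ℝ, 1 < a ∧ ∀ᶠ r in atTop, a ≤ (θ.k (r + 1) : ℝ) / (θ.k r : ℝ)

/-- `limsup q_r < ∞` where `q_r = k_{r+1} / k_r`. -/
def LimsupQLtTop (θ : Lacunary) : Prop :=
  ∃ H : ℝ, ∀ᶠ r in atTop, (θ.k (r + 1) : ℝ) / (θ.k r : ℝ) ≤ H

/-- `A` is lacunarily statistically ward compact w.r.t. `θ`. -/
def LacStatWardCompact (θ : Lacunary) (A : Set ℝ) : Prop :=
  ∀ x : ℕ → ℝ, (∀ n, x n ∈ A) →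
    ∃ φ : ℕ → ℕ, StrictMono φ ∧ LacStatQC θ (x ∘ φ)

/-- `f` is lacunarily statistically ward continuous on `A` w.r.t. `θ`. -/
def LacStatWardContOn (θ : Lacunary) (f : ℝ → ℝ) (A : Set ℝ) : Prop :=
  ∀ x : ℕ → ℝ, (∀ n, x n ∈ A) → LacStatQC θ x → LacStatQC θ (f ∘ x)

/-- Auxiliary recursion: `(auxG k F j).1` is the index of the `j`-th chosen block,
`(auxG k F j).2` is the total length of blocks `0..j`. -/
def auxG (k : ℕ → ℕ) (F : ℕ → ℕ → ℕ) : ℕ → ℕ × ℕ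
  | 0 => (F 1 0, k (F 1 0 + 1) - k (F 1 0))
  | j + 1 =>
      let p := auxG k F j
      let r := F (max (p.1 + 1) ((j + 2) * p.2)) (j + 1)
      (r, p.2 + (k (r + 1) - k r))

theorem exists_statQC_not_lacStatQC (θ : Lacunary)
    (hθ : Filter.liminf (fun r => (θ.k (r + 1) : ℝ) / (θ.k r : ℝ)) atTop = 1) :
    ∃ a : ℕ → ℝ, StatQC a ∧ ¬ LacStatQC θ a := by
  classical
  set k := θ.k with hkdef
  have hkmono : StrictMono k := θ.strictMono
  have hk_le : ∀ n, n ≤ k n := fun n => hkmono.le_apply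
  -- Step 1: frequently q_r < 1 + 1/(m+1)
  have hfreq : ∀ N m : ℕ, ∃ r, N ≤ r ∧ (k (r+1) : ℝ) / (k r : ℝ) < 1 + 1/(m+1) := by
    intro N m
    by_contra hcon
    push_neg at hcon
    have hmem : (1 + 1/(m+1) : ℝ) ∈ {a : ℝ | ∀ᶠ r in atTop, a ≤ (k (r+1) : ℝ) / (k r : ℝ)} := by
      filter_upwards [eventually_ge_atTop N] with r hr
      exact hcon r hr
    rw [Filter.liminf_eq] at hθ
    by_cases hbdd : BddAbove {a : ℝ | ∀ᶠ r in atTop, a ≤ (k (r+1) : ℝ) / (k r : ℝ)}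
    · have := le_csSup hbdd hmem
      rw [hθ] at this
      have h0 : (0:ℝ) < 1/(m+1) := by positivity
      linarith
    · rw [csSup_of_not_bddAbove hbdd, Real.sSup_empty] at hθ
      norm_num at hθ
  choose F hF1 hF2 using hfreq
  set t : ℕ → ℕ := fun j => (auxG k F j).1 with htdef
  set S : ℕ → ℕ := fun j => (auxG k F j).2 with hSdef
  have hg0 : t 0 = F 1 0 ∧ S 0 = k (F 1 0 + 1) - k (F 1 0) := ⟨rfl, rfl⟩
  have hgs : ∀ j, t (j+1) = F (max (t j + 1) ((j+2) * S j)) (j+1) ∧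
      S (j+1) = S j + (k (t (j+1) + 1) - k (t (j+1))) := by
    intro j
    constructor
    · rw [htdef]; rfl
    · rw [hSdef, htdef]; rfl
  -- basic properties
  have ht_lt : ∀ j, t j < t (j+1) := by
    intro j
    have := hF1 (max (t j + 1) ((j+2) * S j)) (j+1)
    rw [(hgs j).1]
    omega
  have ht_mono : StrictMono t := strictMono_nat_of_lt_succ ht_lt
  have ht1 : ∀ j, 1 ≤ t j := by
    intro j
    induction j with
    | zero => rw [hg0.1]; exact hF1 1 0
    | succ j ih => have := ht_lt j; omega
  have hkt_pos : ∀ j, 0 < k (t j) := fun j => lt_of_lt_of_le (ht1 j) (hk_le (t j))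
  -- P1 : (j+1) * h_{t j} ≤ k (t j)
  have hP1 : ∀ j, (j+1) * (k (t j + 1) - k (t j)) ≤ k (t j) := by
    intro j
    have hq : (k (t j + 1) : ℝ) / (k (t j) : ℝ) < 1 + 1/(j+1) := by
      cases j with
      | zero => rw [hg0.1]; simpa using hF2 1 0
      | succ j =>
        have := hF2 (max (t j + 1) ((j+2) * S j)) (j+1)
        rw [← (hgs j).1] at this
        push_cast at this ⊢
        convert this using 3 <;> push_cast <;> ring
    have hkpos : (0:ℝ) < (k (t j) : ℝ) := by exact_mod_cast hkt_pos j
    have hjpos : (0:ℝ) < (j:ℝ) + 1 := by positivity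
    rw [div_lt_iff₀ hkpos] at hq
    have hle : k (t j) ≤ k (t j + 1) := (hkmono (Nat.lt_succ_self _)).le
    have hone : ((j:ℝ)+1) * (1/((j:ℝ)+1)) = 1 := by field_simp
    have hmain : ((j:ℝ)+1) * ((k (t j + 1) : ℝ) - (k (t j) : ℝ)) < (k (t j) : ℝ) := by
      nlinarith [mul_lt_mul_of_pos_left hq hjpos]
    have hcast : ((k (t j + 1) - k (t j) : ℕ) : ℝ) = (k (t j + 1) : ℝ) - (k (t j) : ℝ) :=
      Nat.cast_sub hle
    have hfin : (((j+1) * (k (t j + 1) - k (t j)) : ℕ) : ℝ) < (k (t j) : ℝ) := by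
      push_cast [hcast]
      linarith
    exact_mod_cast hfin.le
  -- P2 : (j+2) * S j ≤ k (t (j+1))
  have hP2 : ∀ j, (j+2) * S j ≤ k (t (j+1)) := by
    intro j
    have h1 := hF1 (max (t j + 1) ((j+2) * S j)) (j+1)
    have h2 := hk_le (t (j+1))
    rw [(hgs j).1] at h2 ⊢
    omega
  -- B : (j+1) * S j ≤ 2 * k (t j)
  have hB : ∀ j, (j+1) * S j ≤ 2 * k (t j) := by
    intro j
    cases j with
    | zero =>
      have h := hP1 0
      rw [hg0.1] at h
      rw [hg0.2, hg0.1]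
      omega
    | succ j =>
      have h1 := hP2 j
      have h2 := hP1 (j+1)
      rw [(hgs j).2]
      calc (j+1+1) * (S j + (k (t (j+1) + 1) - k (t (j+1))))
          = (j+2) * S j + (j+2) * (k (t (j+1) + 1) - k (t (j+1))) := by ring
        _ ≤ k (t (j+1)) + k (t (j+1)) := Nat.add_le_add h1 h2
        _ = 2 * k (t (j+1)) := by ring
  -- S as a sum
  have hSsum : ∀ j, S j = ∑ i ∈ Finset.range (j+1), (k (t i + 1) - k (t i)) := by
    intro j
    induction j with
    | zero => rw [hg0.2, Finset.sum_range_one, hg0.1]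
    | succ j ih => rw [(hgs j).2, Finset.sum_range_succ, ih]
  -- the sequence
  set Bad : ℕ → Prop := fun n => ∃ j, n ∈ Finset.Ioc (k (t j)) (k (t j + 1)) with hBdef
  set d : ℕ → ℝ := fun n => if Bad n then 1 else 0 with hddef
  set a : ℕ → ℝ := fun n => ∑ m ∈ Finset.range n, d m with hadef
  have ha : ∀ n, a (n+1) - a n = d n := by
    intro n; rw [hadef]; simp [Finset.sum_range_succ]
  set c : ℕ → ℕ := fun n => ((Finset.range n).filter Bad).card with hcdef
  -- Lemma A
  have hA : ∀ j n, n ≤ k (t (j+1)) → c n ≤ S j := by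
    intro j n hn
    have hsub : (Finset.range n).filter Bad ⊆
        (Finset.range (j+1)).biUnion (fun i => Finset.Ioc (k (t i)) (k (t i + 1))) := by
      intro m hm
      rw [Finset.mem_filter, Finset.mem_range] at hm
      obtain ⟨hmn, i, hi⟩ := hm
      rw [Finset.mem_Ioc] at hi
      refine Finset.mem_biUnion.mpr ⟨i, Finset.mem_range.mpr ?_, Finset.mem_Ioc.mpr hi⟩
      by_contra hij
      push_neg at hij
      have : k (t (j+1)) ≤ k (t i) := hkmono.monotone (ht_mono.monotone hij)
      omega
    calc c n ≤ ((Finset.range (j+1)).biUnion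
          (fun i => Finset.Ioc (k (t i)) (k (t i + 1)))).card := Finset.card_le_card hsub
      _ ≤ ∑ i ∈ Finset.range (j+1), (Finset.Ioc (k (t i)) (k (t i + 1))).card :=
          Finset.card_biUnion_le
      _ = S j := by rw [hSsum j]; simp [Nat.card_Ioc]
  -- main bound
  have hMain : ∀ j n, k (t j) < n → (c n : ℝ) / n ≤ 2 / (j+1) := by
    intro j n hn
    set P : ℕ → Prop := fun i => k (t i) < n with hPdef
    have hPlt : ∀ i, P i → i < n := by
      intro i hi
      exact lt_of_le_of_lt (le_trans ht_mono.le_apply (hk_le (t i))) hi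
    have hjn : j ≤ n := (hPlt j hn).le
    set j' : ℕ := Nat.findGreatest P n with hj'def
    have hPj' : P j' := Nat.findGreatest_spec hjn hn
    have hjj' : j ≤ j' := Nat.le_findGreatest hjn hn
    have hj'n : j' < n := hPlt j' hPj'
    have hnotP : ¬ P (j'+1) := by
      apply Nat.findGreatest_is_greatest (Nat.lt_succ_self j')
      omega
    have hn_le : n ≤ k (t (j'+1)) := not_lt.mp hnotP
    have hcS := hA j' n hn_le
    have hkey : (j+1) * c n ≤ 2 * n := by
      have h1 : (j'+1) * c n ≤ (j'+1) * S j' := Nat.mul_le_mul_left _ hcS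
      have h2 := hB j'
      have h3 : k (t j') < n := hPj'
      have h4 : (j+1) * c n ≤ (j'+1) * c n := Nat.mul_le_mul_right _ (by omega)
      omega
    have hnpos : (0:ℝ) < n := by
      have hn0 : 0 < n := by omega
      exact_mod_cast hn0
    rw [div_le_div_iff₀ hnpos (by positivity)]
    have hc := Nat.cast_le (α := ℝ) |>.mpr hkey
    push_cast at hc
    nlinarith
  -- tendsto of c n / n
  have hc0 : Tendsto (fun n => (c n : ℝ) / n) atTop (𝓝 0) := by
    rw [Metric.tendsto_atTop]
    intro ε hε
    obtain ⟨j, hj⟩ := exists_nat_gt (2/ε)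
    refine ⟨k (t j) + 1, fun n hn => ?_⟩
    have h1 := hMain j n (by omega)
    have h2 : (2:ℝ) / (j+1) < ε := by
      rw [div_lt_iff₀ (by positivity)]
      rw [div_lt_iff₀ hε] at hj
      nlinarith
    have hnn : (0:ℝ) ≤ (c n : ℝ) / n :=
      div_nonneg (Nat.cast_nonneg _) (Nat.cast_nonneg _)
    rw [Real.dist_eq, sub_zero, abs_of_nonneg hnn]
    linarith
  refine ⟨a, ?_, ?_⟩
  · -- StatQC
    intro ε hε
    have hle : ∀ n : ℕ, ((((Finset.range n).filter
        fun m => ε ≤ |(fun n => a (n + 1) - a n) m - 0|).card : ℝ)) / n ≤ (c n : ℝ) / n := by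
      intro n
      have hcard : ((Finset.range n).filter
          (fun m => ε ≤ |(fun n => a (n + 1) - a n) m - 0|)).card ≤ c n := by
        rw [hcdef]
        apply Finset.card_le_card
        intro m hm
        rw [Finset.mem_filter] at hm ⊢
        refine ⟨hm.1, ?_⟩
        by_contra hbad
        have hd0 : d m = 0 := by rw [hddef]; simp [hbad]
        have hm2 := hm.2
        simp only [sub_zero, ha m, hd0, abs_zero] at hm2
        linarith
      exact div_le_div_of_nonneg_right (by exact_mod_cast hcard) (Nat.cast_nonneg n)
    exact squeeze_zero (fun n => div_nonneg (Nat.cast_nonneg _) (Nat.cast_nonneg _)) hle hc0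
  · -- not LacStatQC
    intro hL
    have h1 := hL 1 one_pos
    have h3 : ∀ᶠ r in atTop, ((((Finset.Ioc (θ.k r) (θ.k (r + 1))).filter
        fun i => (1:ℝ) ≤ |(fun n => a (n + 1) - a n) i - 0|).card : ℝ)
          / ((θ.k (r + 1) - θ.k r : ℕ) : ℝ)) < 1/2 :=
      h1.eventually_lt_const (by norm_num)
    obtain ⟨j, hj⟩ := (ht_mono.tendsto_atTop.eventually h3).exists
    have hfull : (Finset.Ioc (k (t j)) (k (t j + 1))).filter
        (fun i => (1:ℝ) ≤ |(fun n => a (n + 1) - a n) i - 0|) =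
        Finset.Ioc (k (t j)) (k (t j + 1)) := by
      apply Finset.filter_true_of_mem
      intro i hi
      have hbad : Bad i := ⟨j, hi⟩
      simp only [sub_zero, ha i]
      rw [hddef]
      simp [hbad]
    have hpos : 0 < k (t j + 1) - k (t j) := by
      have : k (t j) < k (t j + 1) := hkmono (by omega)
      omega
    rw [show θ.k = k from rfl] at hj
    rw [hfull, Nat.card_Ioc, div_self (by exact_mod_cast hpos.ne')] at hj
    norm_num at hj
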